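/- For every positive integer k there exists a constant N such that for every integer n > N there is a prime p with n/2 < p < n - 2k (i.e., n < 2p and p + 2k < n). -/

import Mathlib

set_option maxHeartbeats 1000000

open Real Nat



/-- For positive `y`, `log y ≤ 4 * √(√y)`. -/
lemma log_le_four_mul_sqrt_sqrt {y : ℝ} (hy : 0 < y) : Real.log y ≤ 4 * √(√y) := by
  have h1 : 0 < √y := Real.sqrt_pos.2 hy
  have h2 : 0 < √(√y) := Real.sqrt_pos.2 h1
  have e1 : Real.log y = 2 * Real.log (√y) := by
    rw [Real.log_sqrt hy.le]; ring
  have e2 : Real.log (√y) = 2 * Real.log (√(√y)) := by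
    rw [Real.log_sqrt h1.le]; ring
  have h3 : Real.log (√(√y)) ≤ √(√y) - 1 := Real.log_le_sub_one_of_pos h2
  nlinarith [h2]

lemma gb_real_main (t : ℕ) {x : ℝ} (hx : ((3:ℝ) * (20 + 8 * t)) ^ 4 ≤ x) :
    x * (2 * x) ^ (√(2 * x) + t) * (4:ℝ) ^ (2 * x / 3) ≤ (4:ℝ) ^ x := by
  have ht : (0:ℝ) ≤ t := Nat.cast_nonneg t
  have hB60 : (60:ℝ) ≤ 3 * (20 + 8 * t) := by nlinarith
  have hBpos : (0:ℝ) < 3 * (20 + 8 * t) := by linarith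
  have hx0 : (0:ℝ) < x := lt_of_lt_of_le (pow_pos hBpos 4) hx
  set q : ℝ := √(√x) with hq
  have hsx : 0 < √x := Real.sqrt_pos.2 hx0
  have hq0 : 0 < q := Real.sqrt_pos.2 hsx
  have hq2 : q ^ 2 = √x := Real.sq_sqrt hsx.le
  have hlogx : Real.log x ≤ 4 * q := log_le_four_mul_sqrt_sqrt hx0
  have e : √(√(2 * x)) = √(√2) * q := by
    rw [hq, Real.sqrt_mul (by norm_num : (0:ℝ) ≤ 2),
        Real.sqrt_mul (Real.sqrt_nonneg 2)]
  clear_value q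
  have hq4 : q ^ 4 = x := by
    have h : (q ^ 2) ^ 2 = x := by rw [hq2]; exact Real.sq_sqrt hx0.le
    nlinarith [h]
  -- q ≥ B
  have hqB : 3 * (20 + 8 * (t:ℝ)) ≤ q := by
    by_contra h
    push_neg at h
    have := pow_lt_pow_left₀ h hq0.le (by norm_num : 4 ≠ 0)
    rw [hq4] at this
    linarith
  have hq1 : (1:ℝ) ≤ q := by linarith
  have hx1 : (1:ℝ) ≤ x := by rw [← hq4]; exact one_le_pow₀ hq1
  -- bounds on logs
  have hsqrt2 : √2 ≤ 2 := by
    nlinarith [Real.sq_sqrt (by norm_num : (0:ℝ) ≤ 2), Real.sqrt_nonneg 2]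
  have hs2 : √(√2) ≤ 2 := by
    nlinarith [Real.sq_sqrt (Real.sqrt_nonneg 2), Real.sqrt_nonneg (√2), hsqrt2]
  have hlog2x : Real.log (2 * x) ≤ 8 * q := by
    have h2x : (0:ℝ) < 2 * x := by linarith
    have h := log_le_four_mul_sqrt_sqrt h2x
    have h2 : √(√(2 * x)) ≤ 2 * q := by
      rw [e]
      nlinarith [Real.sqrt_nonneg (√2)]
    nlinarith
  have hsqrt2x : √(2 * x) ≤ 2 * q ^ 2 := by
    rw [Real.sqrt_mul (by norm_num : (0:ℝ) ≤ 2), ← hq2]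
    nlinarith [Real.sqrt_nonneg 2, sq_nonneg q]
  have hlog4 : (1:ℝ) ≤ Real.log 4 := by
    rw [Real.le_log_iff_exp_le (by norm_num)]
    calc Real.exp 1 ≤ 2.7182818286 := Real.exp_one_lt_d9.le
      _ ≤ 4 := by norm_num
  have hlog2xpos : 0 ≤ Real.log (2 * x) := Real.log_nonneg (by nlinarith)
  -- key log inequality
  have key : Real.log x + Real.log (2 * x) * (√(2 * x) + t) ≤ x / 3 * Real.log 4 := by
    have h1 : Real.log (2*x) * (√(2*x) + t) ≤ (8 * q) * (2 * q ^ 2 + t) := by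
      have hnn : 0 ≤ √(2*x) + (t:ℝ) := by positivity
      have hub : √(2*x) + (t:ℝ) ≤ 2 * q ^ 2 + t := by linarith
      exact mul_le_mul hlog2x hub hnn (by positivity)
    have hq3 : (0:ℝ) ≤ q^3 := by positivity
    have hc1 : q^3 * (3 * (20 + 8 * (t:ℝ))) ≤ q^4 := by
      calc q^3 * (3 * (20 + 8 * (t:ℝ))) ≤ q^3 * q := by
            exact mul_le_mul_of_nonneg_left hqB hq3
        _ = q^4 := by ring
    have hc2 : q ≤ q^3 := by nlinarith
    have hc3 : (t:ℝ) * q ≤ (t:ℝ) * q^3 := mul_le_mul_of_nonneg_left hc2 ht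
    have hpoly : 4 * q + (8 * q) * (2 * q ^ 2 + t) ≤ q ^ 4 / 3 := by nlinarith
    have hfin : q ^ 4 / 3 ≤ x / 3 * Real.log 4 := by
      rw [hq4]
      nlinarith [hlog4, hx0]
    linarith
  -- convert to exponential form
  have h2x : (0:ℝ) < 2 * x := by linarith
  have e1 : x * (2 * x) ^ (√(2 * x) + t) * (4:ℝ) ^ (2 * x / 3)
      = Real.exp (Real.log x + Real.log (2*x) * (√(2 * x) + t) + Real.log 4 * (2 * x / 3)) := by
    rw [Real.rpow_def_of_pos h2x, Real.rpow_def_of_pos (by norm_num : (0:ℝ) < 4),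
        Real.exp_add, Real.exp_add, Real.exp_log hx0]
  have e2 : (4:ℝ) ^ x = Real.exp (Real.log 4 * x) := Real.rpow_def_of_pos (by norm_num) x
  rw [e1, e2]
  apply Real.exp_le_exp.2
  nlinarith [key, hlog4]



/-- Natural number version of the main inequality. -/
lemma gb_nat_main (t : ℕ) {n : ℕ} (hn : (3 * (20 + 8 * t)) ^ 4 ≤ n) :
    n * (2 * n) ^ (Nat.sqrt (2 * n) + t) * 4 ^ (2 * n / 3) ≤ 4 ^ n := by
  have hx : ((3:ℝ) * (20 + 8 * t)) ^ 4 ≤ (n:ℝ) := by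
    have := (Nat.cast_le (α := ℝ)).2 hn
    push_cast at this ⊢
    linarith
  rw [← @Nat.cast_le ℝ]
  simp only [Nat.cast_mul, Nat.cast_pow, Nat.cast_ofNat, ← Real.rpow_natCast]
  refine le_trans ?_ (gb_real_main t hx)
  have hn1 : 1 ≤ n := le_trans (Nat.one_le_pow _ _ (by norm_num)) hn
  have n2_pos : (1:ℝ) ≤ 2 * (n:ℝ) := by
    have : (1:ℝ) ≤ (n:ℝ) := by exact_mod_cast hn1
    linarith
  have hsq : ((Nat.sqrt (2*n) : ℕ) : ℝ) ≤ √2 * √(n:ℝ) := by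
    have h := Real.nat_sqrt_le_real_sqrt (a := 2*n)
    rw [show ((2*n:ℕ):ℝ) = 2*(n:ℝ) by push_cast; ring,
        Real.sqrt_mul (by norm_num : (0:ℝ) ≤ 2)] at h
    exact h
  have hdiv : (((2*n/3 : ℕ)) : ℝ) ≤ 2 * (n:ℝ) / 3 := by
    calc (((2*n/3 : ℕ)) : ℝ) ≤ ((2*n : ℕ):ℝ) / ((3:ℕ):ℝ) := Nat.cast_div_le
      _ = 2 * (n:ℝ) / 3 := by push_cast; ring
  gcongr
  · push_cast
    rw [Real.sqrt_mul (by norm_num : (0:ℝ) ≤ 2)]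
    linarith [hsq]
  · norm_num


/-- Upper bound on the central binomial coefficient keeping track of the primes
in `(n, 2n]`. -/
lemma gb_centralBinom_le (n : ℕ) (n_large : 2 < n) :
    Nat.centralBinom n ≤ (2 * n) ^ Nat.sqrt (2 * n) * 4 ^ (2 * n / 3) *
      (2 * n) ^ ((Finset.Ioc n (2 * n)).filter Nat.Prime).card := by
  have n_pos : 0 < n := (Nat.zero_le _).trans_lt n_large
  have n2_pos : 1 ≤ 2 * n := mul_pos (zero_lt_two' ℕ) n_pos
  set A := Finset.range (2 * n / 3 + 1) with hA
  set B := (Finset.Ioc n (2 * n)).filter Nat.Prime with hB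
  set f : ℕ → ℕ := fun x => x ^ (Nat.centralBinom n).factorization x with hf
  -- the full factorization
  have hdisj : Disjoint A B := by
    rw [Finset.disjoint_left]
    intro x hxA hxB
    rw [hA, Finset.mem_range] at hxA
    rw [hB, Finset.mem_filter, Finset.mem_Ioc] at hxB
    have h1 : x ≤ 2 * n / 3 := by omega
    have h2 : n < x := hxB.1.1
    have := Nat.div_le_self (2 * n) 3
    omega
  have hsub : A ∪ B ⊆ Finset.range (2 * n + 1) := by
    intro x hx
    rw [Finset.mem_union] at hx
    rw [Finset.mem_range]
    rcases hx with h | h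
    · rw [hA, Finset.mem_range] at h
      have := Nat.div_le_self (2 * n) 3
      omega
    · rw [hB, Finset.mem_filter, Finset.mem_Ioc] at h
      omega
  have heq : Nat.centralBinom n = ∏ x ∈ A ∪ B, f x := by
    rw [← Nat.prod_pow_factorization_centralBinom n]
    refine (Finset.prod_subset hsub ?_).symm
    intro x hx hxn
    rw [Finset.mem_range] at hx
    rw [Finset.mem_union] at hxn
    push_neg at hxn
    obtain ⟨hxA, hxB⟩ := hxn
    rw [hA, Finset.mem_range, not_lt] at hxA
    by_cases hp : x.Prime
    · rw [hB, Finset.mem_filter, Finset.mem_Ioc] at hxB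
      have hx2n : x ≤ 2 * n := by omega
      have hxn' : x ≤ n := by
        by_contra h
        exact hxB ⟨⟨by omega, hx2n⟩, hp⟩
      have h3x : 2 * n < 3 * x := by omega
      rw [Nat.factorization_centralBinom_of_two_mul_self_lt_three_mul n_large hxn' h3x]
      exact pow_zero x
    · rw [Nat.factorization_eq_zero_of_not_prime _ hp]
      exact pow_zero x
  rw [heq, Finset.prod_union hdisj]
  have hBound1 : ∏ x ∈ A, f x ≤ (2 * n) ^ Nat.sqrt (2 * n) * 4 ^ (2 * n / 3) := by
    set S := A.filter Nat.Prime with hS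
    have hprodS : ∏ x ∈ S, f x = ∏ x ∈ A, f x := by
      refine Finset.prod_filter_of_ne fun p _ h => ?_
      contrapose! h
      rw [hf]; simp only
      rw [Nat.factorization_eq_zero_of_not_prime _ h, pow_zero]
    rw [← hprodS, ← Finset.prod_filter_mul_prod_filter_not S (· ≤ Nat.sqrt (2 * n))]
    apply Nat.mul_le_mul
    · refine (Finset.prod_le_prod' fun p _ => (?_ : f p ≤ 2 * n)).trans ?_
      · exact Nat.pow_factorization_choose_le (mul_pos two_pos n_pos)
      have hcard : (Finset.Icc 1 (Nat.sqrt (2 * n))).card = Nat.sqrt (2 * n) := by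
        rw [Nat.card_Icc, Nat.add_sub_cancel]
      rw [Finset.prod_const]
      refine pow_right_mono₀ n2_pos ((Finset.card_le_card fun x hx => ?_).trans hcard.le)
      obtain ⟨h1, h2⟩ := Finset.mem_filter.1 hx
      exact Finset.mem_Icc.mpr ⟨(Finset.mem_filter.1 h1).2.one_lt.le, h2⟩
    · refine le_trans ?_ (primorial_le_4_pow (2 * n / 3))
      refine (Finset.prod_le_prod' fun p hp => (?_ : f p ≤ p)).trans ?_
      · obtain ⟨h1, h2⟩ := Finset.mem_filter.1 hp
        refine (pow_right_mono₀ (Finset.mem_filter.1 h1).2.one_lt.le ?_).trans (pow_one p).le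
        exact Nat.factorization_choose_le_one (Nat.sqrt_lt'.mp <| not_le.1 h2)
      refine Finset.prod_le_prod_of_subset_of_one_le' (Finset.filter_subset _ _) ?_
      exact fun p hp _ => (Finset.mem_filter.1 hp).2.one_lt.le
  have hBound2 : ∏ x ∈ B, f x ≤ (2 * n) ^ B.card := by
    rw [← Finset.prod_const]
    refine Finset.prod_le_prod' fun p hp => ?_
    rw [hB, Finset.mem_filter, Finset.mem_Ioc] at hp
    obtain ⟨⟨hp1, hp2⟩, hp3⟩ := hp
    have hle1 : (Nat.centralBinom n).factorization p ≤ 1 := by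
      apply Nat.factorization_choose_le_one
      nlinarith
    calc f p ≤ p ^ 1 := Nat.pow_le_pow_right hp3.one_lt.le hle1
      _ = p := pow_one p
      _ ≤ 2 * n := hp2
  exact Nat.mul_le_mul hBound1 hBound2



/-- There are eventually at least `K` primes in `(m, 2m]`. -/
lemma gb_many_primes (K : ℕ) : ∃ N : ℕ, ∀ m : ℕ, N ≤ m →
    K ≤ ((Finset.Ioc m (2 * m)).filter Nat.Prime).card := by
  refine ⟨(3 * (20 + 8 * K)) ^ 4 + 512, fun m hm => ?_⟩
  by_contra h
  push_neg at h
  have h512 : 512 ≤ m := by omega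
  have ht : ((Finset.Ioc m (2 * m)).filter Nat.Prime).card ≤ K := h.le
  have H2 : 4 ^ m < m * Nat.centralBinom m :=
    Nat.four_pow_lt_mul_centralBinom m (by omega)
  have H3 := gb_centralBinom_le m (by omega)
  have hpow : (2 * m) ^ ((Finset.Ioc m (2 * m)).filter Nat.Prime).card ≤ (2 * m) ^ K :=
    Nat.pow_le_pow_right (by omega) ht
  have H1 : m * (2 * m) ^ (Nat.sqrt (2 * m) + K) * 4 ^ (2 * m / 3) ≤ 4 ^ m :=
    gb_nat_main K (by omega)
  have chain : 4 ^ m < 4 ^ m := by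
    calc 4 ^ m < m * Nat.centralBinom m := H2
      _ ≤ m * ((2 * m) ^ Nat.sqrt (2 * m) * 4 ^ (2 * m / 3) * (2 * m) ^ K) := by
          refine Nat.mul_le_mul_left m (H3.trans ?_)
          exact Nat.mul_le_mul_left _ hpow
      _ = m * (2 * m) ^ (Nat.sqrt (2 * m) + K) * 4 ^ (2 * m / 3) := by
          rw [pow_add]; ring
      _ ≤ 4 ^ m := H1
  exact lt_irrefl _ chain

/-- Generalized Bertrand theorem: for every positive integer `k` there is a
constant `N` such that every `n > N` admits a prime `p` with
`n/2 < p < n - 2k`, i.e. `n < 2*p` and `p + 2*k < n`. -/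
theorem generalized_bertrand :
    ∀ k : ℕ, 0 < k → ∃ N : ℕ, ∀ n : ℕ, N < n →
      ∃ p : ℕ, p.Prime ∧ n < 2 * p ∧ p + 2 * k < n := by
  intro k hk
  obtain ⟨N₁, hN₁⟩ := gb_many_primes (k + 3)
  refine ⟨2 * N₁ + 4 * k + 12, fun n hn => ?_⟩
  set m := (n + 1) / 2 with hm
  have hmN : N₁ ≤ m := by omega
  set T := (Finset.Ioc m (2 * m)).filter Nat.Prime with hT
  have hcard : k + 3 ≤ T.card := hN₁ m hmN
  by_contra hcon
  push_neg at hcon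
  -- every prime in T is in the window [n - 2k, n + 1]
  have hwin : ∀ p ∈ T, n ≤ p + 2 * k ∧ n < 2 * p ∧ p ≤ n + 1 ∧ p % 2 = 1 := by
    intro p hp
    rw [hT, Finset.mem_filter, Finset.mem_Ioc] at hp
    obtain ⟨⟨hp1, hp2⟩, hp3⟩ := hp
    have h2p : n < 2 * p := by omega
    have hodd : p % 2 = 1 := by
      have : p ≠ 2 := by omega
      exact Nat.odd_iff.1 (hp3.odd_of_ne_two this)
    exact ⟨hcon p hp3 h2p, h2p, by omega, hodd⟩
  -- injection into range (k+1)
  have hinj : T.card ≤ (Finset.range (k + 1)).card := by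
    refine Finset.card_le_card_of_injOn (fun p => (p - (n - 2 * k)) / 2) ?_ ?_
    · intro p hp
      obtain ⟨h1, h2, h3, h4⟩ := hwin p hp
      rw [Finset.mem_coe, Finset.mem_range]
      show (p - (n - 2 * k)) / 2 < k + 1
      omega
    · intro p hp q hq hpq
      obtain ⟨hp1, hp2, hp3, hp4⟩ := hwin p hp
      obtain ⟨hq1, hq2, hq3, hq4⟩ := hwin q hq
      simp only at hpq
      omega
  rw [Finset.card_range] at hinj
  omega
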